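/- For all x ∈ (0,π), x^{-2} + (π-x)^{-2} + c₀ < (sin x)^{-2} + 1 holds for every constant c₀ ∈ (0, 2 - 8/π²). -/

import Mathlib

open Set

set_option maxHeartbeats 1000000

namespace Stmt4Aux

open Real

lemma mono_aux {f g : ℝ → ℝ} (hder : ∀ y, HasDerivAt f (g y) y)
    (hg : ∀ y, 0 ≤ y → 0 ≤ g y) {x : ℝ} (hx : 0 ≤ x) : f 0 ≤ f x := by
  have hm : MonotoneOn f (Set.Ici 0) := by
    apply monotoneOn_of_deriv_nonneg (convex_Ici 0)
    · exact fun y _ => (hder y).continuousAt.continuousWithinAt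
    · intro y _
      exact (hder y).differentiableAt.differentiableWithinAt
    · intro y hy
      rw [interior_Ici] at hy
      rw [(hder y).deriv]
      exact hg y hy.le
  exact hm Set.self_mem_Ici (Set.mem_Ici.2 hx) hx

lemma sin_cubic_lb {x : ℝ} (hx : 0 ≤ x) : x - x ^ 3 / 6 ≤ Real.sin x := by
  have h := mono_aux (f := fun y => Real.sin y - y + y ^ 3 / 6)
      (g := fun y => Real.cos y - 1 + y ^ 2 / 2)
      (fun y => by
        have : HasDerivAt (fun y : ℝ => Real.sin y - y + y ^ 3 / 6)
            (Real.cos y - 1 + 3 * y ^ 2 / 6) y :=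
          ((Real.hasDerivAt_sin y).sub (hasDerivAt_id y)).add
            (((hasDerivAt_pow 3 y)).div_const 6)
        convert this using 1
        ring)
      (fun y hy => by nlinarith [Real.one_sub_sq_div_two_le_cos (x := y)]) hx
  simp at h
  linarith

lemma cos_quartic_ub {x : ℝ} (hx : 0 ≤ x) : Real.cos x ≤ 1 - x ^ 2 / 2 + x ^ 4 / 24 := by
  have h := mono_aux (f := fun y => 1 - y ^ 2 / 2 + y ^ 4 / 24 - Real.cos y)
      (g := fun y => -y + y ^ 3 / 6 + Real.sin y)
      (fun y => by
        have : HasDerivAt (fun y : ℝ => 1 - y ^ 2 / 2 + y ^ 4 / 24 - Real.cos y)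
            ((0 : ℝ) - (2:ℕ) * y ^ (2-1) / 2 + (4:ℕ) * y ^ (4-1) / 24 - (-Real.sin y)) y :=
          (((hasDerivAt_const y (1:ℝ)).sub ((hasDerivAt_pow 2 y).div_const 2)).add
            ((hasDerivAt_pow 4 y).div_const 24)).sub (Real.hasDerivAt_cos y)
        convert this using 1
        push_cast
        ring)
      (fun y hy => by nlinarith [sin_cubic_lb hy]) hx
  simp at h
  linarith

lemma sin_quintic_ub {x : ℝ} (hx : 0 ≤ x) : Real.sin x ≤ x - x ^ 3 / 6 + x ^ 5 / 120 := by
  have h := mono_aux (f := fun y => y - y ^ 3 / 6 + y ^ 5 / 120 - Real.sin y)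
      (g := fun y => 1 - (3:ℕ) * y ^ (3-1) / 6 + (5:ℕ) * y ^ (5-1) / 120 - Real.cos y)
      (fun y =>
        (((hasDerivAt_id y).sub ((hasDerivAt_pow 3 y).div_const 6)).add
            ((hasDerivAt_pow 5 y).div_const 120)).sub (Real.hasDerivAt_sin y))
      (fun y hy => by nlinarith [cos_quartic_ub hy]) hx
  simp at h
  linarith

/-- Region A polynomial nonnegativity. -/
lemma regionA (t p : ℝ) (ht : 0 ≤ t) (ht1 : t ≤ 0.5709)
    (hp : 3.141592 < p) (hp' : p < 3.141593) :
    0 ≤ -55296*p^2 + 576*p^6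
      + t^2*(73728 + 55296*p^2 - 4608*p^4 - 192*p^6)
      + t^4*(-73728 - 9216*p^2 + 1536*p^4 + 24*p^6)
      + t^6*(24576 - 768*p^2 - 192*p^4 - p^6)
      + t^8*(-3072 + 288*p^2 + 8*p^4)
      + t^10*(128 - 16*p^2) := by
  have h2 : p^2 ≤ 9.8696066 := by nlinarith
  have h2' : 9.8696002 ≤ p^2 := by nlinarith
  have h4 : p^4 ≤ 97.409134 := by nlinarith
  have h4' : 97.409009 ≤ p^4 := by nlinarith
  have h6 : p^6 ≤ 961.38983 := by nlinarith [h2, h2', h4, h4']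
  have h6' : 961.38799 ≤ p^6 := by nlinarith [h2, h2', h4, h4']
  have ht2 : t^2 ≤ 0.32593 := by nlinarith
  nlinarith [mul_nonneg (sq_nonneg t) (sq_nonneg t), sq_nonneg t,
    mul_nonneg (mul_nonneg (sq_nonneg t) (sq_nonneg t)) (sq_nonneg t),
    sq_nonneg (t^2), sq_nonneg (t^3), sq_nonneg (t^4), sq_nonneg (t^5),
    mul_nonneg (sq_nonneg (t^2)) (sub_nonneg.2 ht2),
    mul_nonneg (mul_nonneg (sq_nonneg (t^2)) (sq_nonneg t)) (sub_nonneg.2 ht2),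
    mul_nonneg (sq_nonneg (t^4)) (sub_nonneg.2 ht2),
    mul_nonneg (sq_nonneg t) (sub_nonneg.2 ht2)]

/-- Region B univariate polynomial nonnegativity. -/
lemma regionB (x : ℝ) (hx : 0 ≤ x) (hx1 : x ≤ 1) :
    0 ≤ (3.141592)^2*(3.141592-x)^2*(20-x^2)*(2-x^2/6+x^4/120)/120
      - (1-x^2/6+x^4/120)^2*((3.141593)^2+((3.141593)^2-8)*(3.141593-x)^2) := by
  nlinarith [sq_nonneg (1-x), sq_nonneg x, mul_nonneg hx (sub_nonneg.2 hx1),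
    sq_nonneg (x-x^2), sq_nonneg (x*(1-x)), pow_le_one₀ (n := 4) hx hx1,
    pow_le_one₀ (n := 6) hx hx1, sq_nonneg (1-x^2),
    mul_nonneg (mul_nonneg hx hx) (sub_nonneg.2 hx1)]

lemma frac_le' {A B s p : ℝ} (hA : 0 < A) (hB : 0 < B) (hs : 0 < s) (hp : 0 < p)
    (h : s * (p^2*B + p^2*A + (p^2-8)*(A*B)) ≤ p^2*(A*B)) :
    1/A + 1/B + (1 - 8/p^2) ≤ 1/s := by
  have e : 1/A + 1/B + (1 - 8/p^2) = (p^2*B + p^2*A + (p^2-8)*(A*B))/(p^2*(A*B)) := by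
    field_simp
  rw [e, div_le_div_iff₀ (by positivity) hs]
  nlinarith [h]

/-- Key half-interval inequality. -/
lemma half (x : ℝ) (hx : 0 < x) (hxle : x ≤ π/2) :
    1/x^2 + 1/(π-x)^2 + (1 - 8/π^2) ≤ 1/Real.sin x^2 := by
  have hπ : (3.141592:ℝ) < π := pi_gt_d6
  have hπ' : π < 3.141593 := pi_lt_d6
  have hxπ : x < π := lt_of_le_of_lt hxle (by linarith)
  have hsin : 0 < Real.sin x := Real.sin_pos_of_pos_of_lt_pi hx hxπ
  have hA : (0:ℝ) < x^2 := by positivity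
  have hB : (0:ℝ) < (π-x)^2 := by nlinarith
  apply frac_le' hA hB (by positivity) (by linarith)
  -- polynomial goal
  have hp8 : (0:ℝ) ≤ π^2 - 8 := by nlinarith
  have hS : 0 ≤ π^2*(π-x)^2 + π^2*x^2 + (π^2-8)*(x^2*(π-x)^2) := by
    nlinarith [sq_nonneg (π-x), sq_nonneg x,
      mul_nonneg hp8 (mul_nonneg (sq_nonneg x) (sq_nonneg (π-x)))]
  rcases le_or_gt x 1 with hx1 | hx1
  · -- region B: 0 < x ≤ 1
    have hub : Real.sin x ≤ x - x^3/6 + x^5/120 := sin_quintic_ub hx.le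
    have hs2u : Real.sin x^2 ≤ (x - x^3/6 + x^5/120)^2 := by nlinarith
    have hU := regionB x hx.le hx1
    have f1 : 0 ≤ x^2 - (x - x^3/6 + x^5/120)^2 := by
      nlinarith [mul_nonneg (mul_nonneg (pow_nonneg hx.le 4)
        (by nlinarith : (0:ℝ) ≤ 20 - x^2)) (by nlinarith : (0:ℝ) ≤ 2 - x^2/6 + x^4/120)]
    have a3 : (3.141592:ℝ)^2*(3.141592-x)^2 ≤ π^2*(π-x)^2 := by
      nlinarith [mul_nonneg (by linarith : (0:ℝ) ≤ π - 3.141592)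
          (by linarith : (0:ℝ) ≤ π + 3.141592 - x),
        (by nlinarith : (0:ℝ) ≤ π*(π-x) + 3.141592*(3.141592-x))]
    have a4 : 0 ≤ (π^2*(π-x)^2 - (3.141592:ℝ)^2*(3.141592-x)^2) *
        (x^2 - (x - x^3/6 + x^5/120)^2) := mul_nonneg (by linarith) f1
    have a6 : 0 ≤ x^2*(x - x^3/6 + x^5/120)^2*((3.141593:ℝ)^2 - π^2) := by
      apply mul_nonneg (by positivity)
      nlinarith
    have a7 : (π^2-8)*(π-x)^2 ≤ ((3.141593:ℝ)^2-8)*(3.141593-x)^2 := by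
      nlinarith [mul_nonneg (by norm_num : (0:ℝ) ≤ (3.141593:ℝ)^2 - 8)
          (mul_nonneg (by linarith : (0:ℝ) ≤ (3.141593:ℝ) - π)
            (by linarith : (0:ℝ) ≤ (3.141593:ℝ) + π - 2*x)),
        mul_nonneg (by nlinarith : (0:ℝ) ≤ (3.141593:ℝ)^2 - π^2) (sq_nonneg (π-x))]
    have a8 : 0 ≤ x^2*(x - x^3/6 + x^5/120)^2*
        (((3.141593:ℝ)^2-8)*(3.141593-x)^2 - (π^2-8)*(π-x)^2) :=
      mul_nonneg (by positivity) (by linarith)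
    have a1 : 0 ≤ ((x - x^3/6 + x^5/120)^2 - Real.sin x^2) *
        (π^2*(π-x)^2 + π^2*x^2 + (π^2-8)*(x^2*(π-x)^2)) :=
      mul_nonneg (by linarith) hS
    have a2 : 0 ≤ x^4 * ((3.141592)^2*(3.141592-x)^2*(20-x^2)*(2-x^2/6+x^4/120)/120
        - (1-x^2/6+x^4/120)^2*((3.141593)^2+((3.141593)^2-8)*(3.141593-x)^2)) :=
      mul_nonneg (by positivity) hU
    linarith [a1, a2, a4, a6, a8]
  · -- region A: 1 < x ≤ π/2
    have ht : 0 ≤ π/2 - x := by linarith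
    have ht1 : π/2 - x ≤ 0.5709 := by linarith
    have hR := regionA (π/2 - x) π ht ht1 hπ hπ'
    have hsT : Real.sin x ≤ 1 - (π/2-x)^2/2 + (π/2-x)^4/24 := by
      rw [← Real.cos_pi_div_two_sub]
      exact cos_quartic_ub ht
    have a1 : 0 ≤ ((1 - (π/2-x)^2/2 + (π/2-x)^4/24)^2 - Real.sin x^2) *
        (π^2*(π-x)^2 + π^2*x^2 + (π^2-8)*(x^2*(π-x)^2)) := by
      apply mul_nonneg _ hS
      nlinarith [hsT, hsin.le]
    have a2 : 0 ≤ (π/2-x)^2 * (-55296*π^2 + 576*π^6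
        + (π/2-x)^2*(73728 + 55296*π^2 - 4608*π^4 - 192*π^6)
        + (π/2-x)^4*(-73728 - 9216*π^2 + 1536*π^4 + 24*π^6)
        + (π/2-x)^6*(24576 - 768*π^2 - 192*π^4 - π^6)
        + (π/2-x)^8*(-3072 + 288*π^2 + 8*π^4)
        + (π/2-x)^10*(128 - 16*π^2)) := mul_nonneg (sq_nonneg _) hR
    linarith [a1, a2]

lemma key (x : ℝ) (hx : 0 < x) (hxπ : x < π) :
    1/x^2 + 1/(π-x)^2 + (1 - 8/π^2) ≤ 1/Real.sin x^2 := by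
  rcases le_or_gt x (π/2) with h | h
  · exact half x hx h
  · have h2 := half (π - x) (by linarith) (by linarith)
    rw [Real.sin_pi_sub, sub_sub_cancel] at h2
    linarith

end Stmt4Aux

/-- For every constant `c₀ ∈ (0, 2 - 8/π²)` and all `x ∈ (0,π)`,
`x⁻² + (π-x)⁻² + c₀ < (sin x)⁻² + 1`. -/
theorem stmt4 (c₀ : ℝ) (hc0 : 0 < c₀) (hc1 : c₀ < 2 - 8 / Real.pi ^ 2) :
    ∀ x ∈ Ioo (0 : ℝ) Real.pi,
      1 / x ^ 2 + 1 / (Real.pi - x) ^ 2 + c₀ < 1 / Real.sin x ^ 2 + 1 := by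
  rintro x ⟨hx0, hxπ⟩
  have h := Stmt4Aux.key x hx0 hxπ
  linarith
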